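/- Let 0 < μ₀ < μ₁ and define t*(μ₀, μ₁) = μ₀ μ₁ ln(μ₁/μ₀)/(μ₁ − μ₀). Then t* is strictly increasing in μ₁ for fixed μ₀ (and strictly increasing in μ₀ for fixed μ₁). -/

import Mathlib

/-- Derivative in the second argument. -/
lemma tstar_deriv_aux1 (a x : ℝ) (ha : 0 < a) (hx : a < x) :
    HasDerivAt (fun y => a * y * Real.log (y / a) / (y - a))
      (a * (x - a - a * Real.log (x / a)) / (x - a) ^ 2) x := by
  have hx0 : 0 < x := ha.trans hx
  have hne : x - a ≠ 0 := sub_ne_zero.mpr (ne_of_gt hx)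
  have hlog : HasDerivAt (fun y : ℝ => Real.log (y / a)) (1 / x) x := by
    have h1 : HasDerivAt (fun y : ℝ => Real.log y - Real.log a) (1 / x) x := by
      simpa [one_div] using (Real.hasDerivAt_log (ne_of_gt hx0)).sub_const (Real.log a)
    refine h1.congr_of_eventuallyEq ?_
    filter_upwards [eventually_gt_nhds hx0] with y hy
    rw [Real.log_div (ne_of_gt hy) (ne_of_gt ha)]
  have hnum : HasDerivAt (fun y : ℝ => a * y * Real.log (y / a))
      (a * Real.log (x / a) + (a * x) * (1 / x)) x := by
    have hmul : HasDerivAt (fun y : ℝ => a * y) a x := by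
      simpa using ((hasDerivAt_id x).const_mul a)
    exact hmul.mul hlog
  have hden : HasDerivAt (fun y : ℝ => y - a) 1 x := (hasDerivAt_id x).sub_const a
  have h := hnum.div hden hne
  refine h.congr_deriv ?_
  rw [div_eq_div_iff (by positivity) (by positivity)]
  field_simp
  ring

/-- Derivative in the first argument. -/
lemma tstar_deriv_aux2 (b x : ℝ) (hx0 : 0 < x) (hx : x < b) :
    HasDerivAt (fun y => y * b * Real.log (b / y) / (b - y))
      (b * (b * Real.log (b / x) - (b - x)) / (b - x) ^ 2) x := by
  have hb0 : 0 < b := hx0.trans hx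
  have hne : b - x ≠ 0 := sub_ne_zero.mpr (ne_of_gt hx)
  have hlog : HasDerivAt (fun y : ℝ => Real.log (b / y)) (-(1 / x)) x := by
    have h1 : HasDerivAt (fun y : ℝ => Real.log b - Real.log y) (-(1 / x)) x := by
      simpa [one_div] using (Real.hasDerivAt_log (ne_of_gt hx0)).const_sub (Real.log b)
    refine h1.congr_of_eventuallyEq ?_
    filter_upwards [eventually_gt_nhds hx0] with y hy
    rw [Real.log_div (ne_of_gt hb0) (ne_of_gt hy)]
  have hnum : HasDerivAt (fun y : ℝ => y * b * Real.log (b / y))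
      (b * Real.log (b / x) + (x * b) * (-(1 / x))) x := by
    have hmul : HasDerivAt (fun y : ℝ => y * b) b x := by
      simpa using ((hasDerivAt_id x).mul_const b)
    exact hmul.mul hlog
  have hden : HasDerivAt (fun y : ℝ => b - y) (-1) x := by
    simpa using ((hasDerivAt_id x).const_sub b)
  have h := hnum.div hden hne
  refine h.congr_deriv ?_
  rw [div_eq_div_iff (by positivity) (by positivity)]
  field_simp
  ring

lemma tstar_mono1 (a : ℝ) (ha : 0 < a) :
    StrictMonoOn (fun x => a * x * Real.log (x / a) / (x - a)) (Set.Ioi a) := by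
  apply strictMonoOn_of_deriv_pos (convex_Ioi a)
  · intro x hx
    exact ((tstar_deriv_aux1 a x ha hx).continuousAt).continuousWithinAt
  · intro x hx
    rw [interior_Ioi] at hx
    rw [(tstar_deriv_aux1 a x ha hx).deriv]
    have hx0 : 0 < x := ha.trans hx
    have hr : (1 : ℝ) < x / a := (one_lt_div ha).mpr hx
    have hL : Real.log (x / a) < x / a - 1 :=
      Real.log_lt_sub_one_of_pos (by positivity) (ne_of_gt hr)
    have h2 : a * Real.log (x / a) < a * (x / a - 1) :=
      mul_lt_mul_of_pos_left hL ha
    have h3 : a * (x / a - 1) = x - a := by field_simp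
    apply div_pos
    · nlinarith
    · exact pow_pos (sub_pos.mpr hx) 2

lemma tstar_mono2 (b : ℝ) :
    StrictMonoOn (fun x => x * b * Real.log (b / x) / (b - x)) (Set.Ioo 0 b) := by
  apply strictMonoOn_of_deriv_pos (convex_Ioo 0 b)
  · intro x hx
    exact ((tstar_deriv_aux2 b x hx.1 hx.2).continuousAt).continuousWithinAt
  · intro x hx
    rw [interior_Ioo] at hx
    obtain ⟨hx0, hxb⟩ := hx
    rw [(tstar_deriv_aux2 b x hx0 hxb).deriv]
    have hb0 : 0 < b := hx0.trans hxb
    have hr : x / b < 1 := (div_lt_one hb0).mpr hxb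
    have hL : Real.log (x / b) < x / b - 1 :=
      Real.log_lt_sub_one_of_pos (by positivity) (ne_of_lt hr)
    have hneg : Real.log (x / b) = -Real.log (b / x) := by
      rw [Real.log_div (ne_of_gt hx0) (ne_of_gt hb0),
          Real.log_div (ne_of_gt hb0) (ne_of_gt hx0)]
      ring
    have h2 : b * Real.log (x / b) < b * (x / b - 1) :=
      mul_lt_mul_of_pos_left hL hb0
    have h3 : b * (x / b - 1) = x - b := by field_simp
    rw [hneg] at h2
    have hkey : b - x < b * Real.log (b / x) := by nlinarith
    apply div_pos
    · have : 0 < b * Real.log (b / x) - (b - x) := by linarith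
      exact mul_pos hb0 this
    · exact pow_pos (sub_pos.mpr hxb) 2

/-- The optimal threshold `t*(μ₀,μ₁) = μ₀ μ₁ ln(μ₁/μ₀)/(μ₁ − μ₀)` is strictly
increasing in `μ₁` for fixed `μ₀`, and strictly increasing in `μ₀` for fixed
`μ₁`. -/
theorem tstar_strictMono
    (tstar : ℝ → ℝ → ℝ)
    (htstar : ∀ μ₀ μ₁, tstar μ₀ μ₁ = μ₀ * μ₁ * Real.log (μ₁ / μ₀) / (μ₁ - μ₀)) :
    (∀ μ₀ μ₁ μ₁' : ℝ, 0 < μ₀ → μ₀ < μ₁ → μ₁ < μ₁' →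
        tstar μ₀ μ₁ < tstar μ₀ μ₁') ∧
    (∀ μ₀ μ₀' μ₁ : ℝ, 0 < μ₀ → μ₀ < μ₀' → μ₀' < μ₁ →
        tstar μ₀ μ₁ < tstar μ₀' μ₁) := by
  constructor
  · intro μ₀ μ₁ μ₁' h0 h1 h2
    rw [htstar, htstar]
    exact tstar_mono1 μ₀ h0 (Set.mem_Ioi.mpr h1) (Set.mem_Ioi.mpr (h1.trans h2)) h2
  · intro μ₀ μ₀' μ₁ h0 h1 h2
    rw [htstar, htstar]
    exact tstar_mono2 μ₁ ⟨h0, h1.trans h2⟩ ⟨h0.trans h1, h2⟩ h1
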